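/- Let h : [0,T] → ℝ be continuous with 0 < E₁ ≤ h(t) ≤ E₂ for all t ∈ [0,T]. Then for every real k < 0 and every integer n ≥ 1, one has (Φ(n,h))^k ≤ E₁^k · n^{−2k} · D₂^{−k} · (1 − e^{−D₁T})^k. -/

import Mathlib

/-- For continuous `h` with `0 < E₁ ≤ h ≤ E₂` on `[0,T]`, for every real `k < 0`
and integer `n ≥ 1`, `(Φ(n,h))^k ≤ E₁^k · n^{-2k} · D₂^{-k} · (1 - e^{-D₁T})^k`. -/
theorem stmt_1
    (T D₁ D₂ E₁ E₂ : ℝ) (hT : 0 < T) (hD₁ : 0 < D₁) (hD₁₂ : D₁ ≤ D₂)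
    (a : ℝ → ℝ) (ha : ContinuousOn a (Set.Icc 0 T))
    (haB : ∀ t ∈ Set.Icc 0 T, D₁ ≤ a t ∧ a t ≤ D₂)
    (A Bf : ℝ → ℝ) (hA : ∀ t, A t = ∫ s in (0:ℝ)..t, a s)
    (hBf : ∀ t, Bf t = A t - A T)
    (Φ : ℕ → (ℝ → ℝ) → ℝ)
    (hΦ : ∀ (n : ℕ) (h : ℝ → ℝ), Φ n h = ∫ t in (0:ℝ)..T, Real.exp ((n:ℝ)^2 * Bf t) * h t)
    (h : ℝ → ℝ) (hhc : ContinuousOn h (Set.Icc 0 T))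
    (hE₁ : 0 < E₁)
    (hhB : ∀ t ∈ Set.Icc 0 T, E₁ ≤ h t ∧ h t ≤ E₂)
    (k : ℝ) (hk : k < 0) (n : ℕ) (hn : 1 ≤ n) :
    (Φ n h) ^ k ≤
      E₁ ^ k * (n:ℝ) ^ (-(2*k)) * D₂ ^ (-k) * (1 - Real.exp (-D₁ * T)) ^ k := by
  have hD₂ : 0 < D₂ := hD₁.trans_le hD₁₂
  have hn1 : (1:ℝ) ≤ (n:ℝ) := by exact_mod_cast hn
  have hnpos : (0:ℝ) < (n:ℝ) := lt_of_lt_of_le one_pos hn1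
  set c : ℝ := (n:ℝ)^2 * D₂ with hc
  have hcpos : 0 < c := by positivity
  have hD₁c : D₁ ≤ c := by
    calc D₁ ≤ D₂ := hD₁₂
    _ = 1 * D₂ := (one_mul _).symm
    _ ≤ (n:ℝ)^2 * D₂ := by nlinarith [mul_le_mul_of_nonneg_right (show (1:ℝ) ≤ (n:ℝ)^2 by nlinarith [hn1]) hD₂.le]
  -- interval Icc 0 T is uIcc
  have huIcc : Set.uIcc (0:ℝ) T = Set.Icc 0 T := Set.uIcc_of_le hT.le
  have haint : IntervalIntegrable a MeasureTheory.volume 0 T := by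
    apply ContinuousOn.intervalIntegrable; rwa [huIcc]
  -- continuity of A on [0,T]
  have hAcont : ContinuousOn A (Set.Icc 0 T) := by
    have hInt : MeasureTheory.IntegrableOn a (Set.uIcc 0 T) := by
      rw [huIcc]; exact ha.integrableOn_Icc
    have := intervalIntegral.continuousOn_primitive_interval hInt
    rw [huIcc] at this
    exact this.congr (fun t _ => (hA t))
  -- pointwise bound: Bf t ≥ -D₂ * (T - t) on [0,T]
  have hBflb : ∀ t ∈ Set.Icc (0:ℝ) T, -D₂ * (T - t) ≤ Bf t := by
    intro t ht
    rw [hBf, hA, hA]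
    have h1 : IntervalIntegrable a MeasureTheory.volume 0 t := by
      apply ContinuousOn.intervalIntegrable
      apply ha.mono; rw [Set.uIcc_of_le ht.1]
      exact Set.Icc_subset_Icc le_rfl ht.2
    have h2 : (∫ s in (0:ℝ)..t, a s) - (∫ s in (0:ℝ)..T, a s) = - ∫ s in t..T, a s := by
      rw [← intervalIntegral.integral_interval_sub_left haint h1]; ring
    rw [h2]
    have h3 : (∫ s in t..T, a s) ≤ ∫ s in t..T, D₂ := by
      apply intervalIntegral.integral_mono_on ht.2
      · exact h1.symm.trans haint
      · exact intervalIntegrable_const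
      · intro s hs; exact (haB s ⟨le_trans ht.1 hs.1, hs.2⟩).2
    rw [intervalIntegral.integral_const, smul_eq_mul] at h3
    linarith
  -- the lower-bound integrand value
  have hptwise : ∀ t ∈ Set.Icc (0:ℝ) T,
      Real.exp (c * t - c * T) * E₁ ≤ Real.exp ((n:ℝ)^2 * Bf t) * h t := by
    intro t ht
    have hexp : Real.exp (c * t - c * T) ≤ Real.exp ((n:ℝ)^2 * Bf t) := by
      apply Real.exp_le_exp.mpr
      have := hBflb t ht
      have hn2 : (0:ℝ) ≤ (n:ℝ)^2 := by positivity
      have h4 := mul_le_mul_of_nonneg_left this hn2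
      rw [hc]; nlinarith [h4]
    exact mul_le_mul hexp (hhB t ht).1 hE₁.le (Real.exp_pos _).le
  -- integrability of both integrands
  have hint₁ : IntervalIntegrable (fun t => Real.exp (c * t - c * T) * E₁)
      MeasureTheory.volume 0 T := by
    apply Continuous.intervalIntegrable; continuity
  have hint₂ : IntervalIntegrable (fun t => Real.exp ((n:ℝ)^2 * Bf t) * h t)
      MeasureTheory.volume 0 T := by
    apply ContinuousOn.intervalIntegrable
    rw [huIcc]
    have hBfcont : ContinuousOn Bf (Set.Icc 0 T) := by
      have : ContinuousOn (fun t => A t - A T) (Set.Icc 0 T) :=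
        hAcont.sub continuousOn_const
      exact this.congr (fun t _ => hBf t)
    exact ((Real.continuous_exp.comp_continuousOn (continuousOn_const.mul hBfcont))).mul hhc
  -- compare integrals
  have hmono : (∫ t in (0:ℝ)..T, Real.exp (c * t - c * T) * E₁) ≤ Φ n h := by
    rw [hΦ]
    exact intervalIntegral.integral_mono_on hT.le hint₁ hint₂ hptwise
  -- compute lower integral
  have hcalc : (∫ t in (0:ℝ)..T, Real.exp (c * t - c * T) * E₁)
      = E₁ * (1 - Real.exp (-c * T)) / c := by
    have hderiv : ∀ t ∈ Set.uIcc (0:ℝ) T,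
        HasDerivAt (fun t => Real.exp (c * t - c * T) * E₁ / c)
          (Real.exp (c * t - c * T) * E₁) t := by
      intro t _
      have h1 : HasDerivAt (fun t => c * t - c * T) c t := by
        simpa using ((hasDerivAt_id t).const_mul c).sub_const (c * T)
      have h2 := (h1.exp.mul_const E₁).div_const c
      convert h2 using 1
      case e'_9 => rw [mul_right_comm _ c, mul_div_cancel_right₀ _ hcpos.ne']
      all_goals rfl
    rw [intervalIntegral.integral_eq_sub_of_hasDerivAt hderiv hint₁]
    simp only [mul_zero, zero_sub, sub_self, Real.exp_zero]
    field_simp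
  set L : ℝ := E₁ * (1 - Real.exp (-D₁ * T)) / c with hL
  have hexpD : Real.exp (-c * T) ≤ Real.exp (-D₁ * T) := by
    apply Real.exp_le_exp.mpr; nlinarith
  have hexpD1 : Real.exp (-D₁ * T) < 1 := by
    rw [← Real.exp_zero]; apply Real.exp_lt_exp.mpr; nlinarith
  have hLpos : 0 < L := by
    apply div_pos _ hcpos; apply mul_pos hE₁; linarith
  have hLle : L ≤ Φ n h := by
    refine le_trans ?_ hmono
    rw [hcalc, hL]
    apply div_le_div_of_nonneg_right _ hcpos.le
    apply mul_le_mul_of_nonneg_left _ hE₁.le; linarith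
  have hmain : (Φ n h) ^ k ≤ L ^ k := Real.rpow_le_rpow_of_nonpos hLpos hLle hk.le
  refine hmain.trans_eq ?_
  have h1e : 0 < 1 - Real.exp (-D₁ * T) := by linarith
  rw [hL, div_eq_mul_inv, Real.mul_rpow (by positivity) (by positivity),
    Real.mul_rpow hE₁.le h1e.le, ← Real.rpow_neg_one c,
    ← Real.rpow_mul hcpos.le, hc,
    Real.mul_rpow (by positivity) hD₂.le, ← Real.rpow_natCast (n:ℝ) 2,
    ← Real.rpow_mul hnpos.le]
  norm_num
  ring
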